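/- arXiv:2604.04377 — 2 statements merged into one kernel-verified Lean document; each statement's English description precedes it below -/
import Mathlib

section
/- For the Thue–Morse words t_n, γ(t_n) = o(s(t_n)) as n → ∞; in particular γ(t_n) ≤ 4 for all n while s(t_n) → ∞. -/
/-- `u` occurs in `w` starting at 1-indexed position `i`. -/
def occursAt {α : Type*} (w u : List α) (i : ℕ) : Prop :=
  1 ≤ i ∧ i + u.length ≤ w.length + 1 ∧ (w.drop (i - 1)).take u.length = u

/-- `u` is a right extension in `w`: `u = x ++ [c]`, both `x++[c]` and `x++[c']`
occur in `w` for some `c' ≠ c`. -/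
def RightExt {α : Type*} (w u : List α) : Prop :=
  ∃ (x : List α) (c c' : α), c ≠ c' ∧ u = x ++ [c] ∧
    (x ++ [c]) <:+: w ∧ (x ++ [c']) <:+: w

/-- super-maximal right extension: not a proper suffix of another right extension. -/
def SupMaxExt {α : Type*} (w u : List α) : Prop :=
  RightExt w u ∧ ∀ v, RightExt w v → u <:+ v → u = v

def SRE {α : Type*} (w : List α) : Set (List α) := {u | SupMaxExt w u}

noncomputable def chi {α : Type*} (w : List α) : ℕ := (SRE w).ncard

/-- `w` ends with a character that occurs nowhere else. -/
def UniqueTerm {α : Type*} (w : List α) : Prop :=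
  ∃ (v : List α) (d : α), w = v ++ [d] ∧ d ∉ v

/-- substring equation system -/
structure SES (α : Type*) where
  n : ℕ
  Eqs : Finset (ℕ × ℕ × ℕ)
  Ch : Finset (ℕ × α)

def SES.valid {α : Type*} (E : SES α) : Prop :=
  (∀ e ∈ E.Eqs, 1 ≤ e.1 ∧ 1 ≤ e.2.1 ∧ 1 ≤ e.2.2 ∧
      e.1 + e.2.2 ≤ E.n + 1 ∧ e.2.1 + e.2.2 ≤ E.n + 1) ∧
  (∀ kc ∈ E.Ch, 1 ≤ kc.1 ∧ kc.1 ≤ E.n)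

def SES.sat {α : Type*} (E : SES α) (w : List α) : Prop :=
  w.length = E.n ∧
  (∀ e ∈ E.Eqs, (w.drop (e.1 - 1)).take e.2.2 = (w.drop (e.2.1 - 1)).take e.2.2) ∧
  (∀ kc ∈ E.Ch, w[kc.1 - 1]? = some kc.2)

def SES.represents {α : Type*} (E : SES α) (w : List α) : Prop :=
  E.sat w ∧ ∀ w' : List α, E.sat w' → w' = w

def SES.size {α : Type*} (E : SES α) : ℕ := E.Eqs.card + E.Ch.card

/-- minimum size of a valid SES representing `w` -/
noncomputable def sVal {α : Type*} (w : List α) : ℕ :=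
  sInf {k | ∃ E : SES α, E.valid ∧ E.represents w ∧ E.size = k}

/-- bidirectional macro scheme machinery -/
def phraseLen {α : Type*} : α ⊕ (ℕ × ℕ) → ℕ
  | Sum.inl _ => 1
  | Sum.inr (_, ℓ) => ℓ

def startPos {α : Type*} (ph : List (α ⊕ (ℕ × ℕ))) (t : ℕ) : ℕ :=
  1 + ((ph.take t).map phraseLen).sum

/-- the phrase list `ph` is a (content-correct) macro scheme for `w` -/
def BMSFor {α : Type*} (w : List α) (ph : List (α ⊕ (ℕ × ℕ))) : Prop :=
  (ph.map phraseLen).sum = w.length ∧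
  ∀ t (h : t < ph.length),
    match ph.get ⟨t, h⟩ with
    | Sum.inl c => w[startPos ph t - 1]? = some c
    | Sum.inr (p, ℓ) => 1 ≤ ℓ ∧ 1 ≤ p ∧ p + ℓ ≤ w.length + 1 ∧
        (w.drop (startPos ph t - 1)).take ℓ = (w.drop (p - 1)).take ℓ

/-- the transition function τ (on 0-based offsets) -/
def tauAux {α : Type*} : List (α ⊕ (ℕ × ℕ)) → ℕ → Option ℕ
  | [], _ => none
  | (Sum.inl _) :: rest, i => if i = 0 then none else tauAux rest (i - 1)
  | (Sum.inr (p, ℓ)) :: rest, i => if i < ℓ then some (p + i) else tauAux rest (i - ℓ)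

/-- τ on 1-indexed positions -/
def tauStep {α : Type*} (ph : List (α ⊕ (ℕ × ℕ))) (i : ℕ) : Option ℕ :=
  tauAux ph (i - 1)

/-- validity: every position reaches ⊥ after finitely many steps -/
def BMSValid {α : Type*} (ph : List (α ⊕ (ℕ × ℕ))) (n : ℕ) : Prop :=
  ∀ i, 1 ≤ i → i ≤ n →
    ∃ k, (fun o : Option ℕ => o.bind (tauStep ph))^[k] (some i) = none

noncomputable def bVal {α : Type*} (w : List α) : ℕ :=
  sInf {k | ∃ ph : List (α ⊕ (ℕ × ℕ)),
      BMSFor w ph ∧ BMSValid ph w.length ∧ ph.length = k}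

/-- string attractor -/
def IsAttractor {α : Type*} (w : List α) (Γ : Finset ℕ) : Prop :=
  (∀ p ∈ Γ, 1 ≤ p ∧ p ≤ w.length) ∧
  ∀ u : List α, u ≠ [] → u <:+: w →
    ∃ i, occursAt w u i ∧ ∃ p ∈ Γ, i ≤ p ∧ p ≤ i + u.length - 1

noncomputable def gammaVal {α : Type*} (w : List α) : ℕ :=
  sInf {k | ∃ Γ : Finset ℕ, IsAttractor w Γ ∧ Γ.card = k}

/-- Thue–Morse words over Bool (`false` = a, `true` = b) -/
def tm : ℕ → List Bool
  | 0 => [false]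
  | n + 1 => (tm n).flatMap (fun b => [b, !b])

/-- leftmost occurrence -/
def leftmostOcc {α : Type*} (w v : List α) (i : ℕ) : Prop :=
  occursAt w v i ∧ ∀ i', occursAt w v i' → i ≤ i'

/-- generating pairs of the equivalence `≡_χ` -/
def GenPair {α : Type*} (w : List α) (j j' : ℕ) : Prop :=
  ∃ (y z x : List α) (c c' : α) (i i' : ℕ),
    x ≠ [] ∧
    SupMaxExt w (y ++ x ++ [c]) ∧ SupMaxExt w (z ++ x ++ [c']) ∧
    (y = [] ∨ z = [] ∨ y.getLast? ≠ z.getLast?) ∧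
    leftmostOcc w (y ++ x ++ [c]) i ∧ leftmostOcc w (z ++ x ++ [c']) i' ∧
    ∃ k < x.length, j = i + y.length + k ∧ j' = i' + z.length + k

def chiEquiv {α : Type*} (w : List α) : ℕ → ℕ → Prop := Relation.EqvGen (GenPair w)
def T : ℕ → Bool
  | 0 => false
  | (n+1) => if (n+1) % 2 = 0 then T ((n+1)/2) else ! T ((n+1)/2)
decreasing_by all_goals exact Nat.div_lt_self (Nat.succ_pos n) one_lt_two



lemma T_even (x : ℕ) : T (2*x) = T x := by
  rcases x with _|y
  · rfl
  · show T ((2*y+1)+1) = _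
    rw [T]
    have h1 : (2*y+1+1) % 2 = 0 := by omega
    have h2 : (2*y+1+1) / 2 = y+1 := by omega
    simp [h1, h2]

lemma T_odd (x : ℕ) : T (2*x+1) = ! T x := by
  show T ((2*x)+1) = _
  rw [T]
  have h1 : (2*x+1) % 2 = 1 := by omega
  have h2 : (2*x+1) / 2 = x := by omega
  simp [h1, h2]

lemma T_zero : T 0 = false := by simp [T]

lemma no3 (y : ℕ) : ¬ (T y = T (y+1) ∧ T (y+1) = T (y+2)) := by
  rintro ⟨h1, h2⟩
  rcases Nat.even_or_odd y with ⟨d, hd⟩ | ⟨d, hd⟩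
  · subst hd
    rw [show d + d = 2*d by ring, T_even, show 2*d+1 = 2*d+1 from rfl, T_odd] at h1
    simp at h1
  · subst hd
    rw [show 2*d+1+1 = 2*(d+1) by ring, T_even, show 2*d+1+2 = 2*(d+1)+1 by ring, T_odd] at h2
    simp at h2

lemma no5alt (c : ℕ) : ¬ (T (c+1) = ! T c ∧ T (c+2) = ! T (c+1) ∧ T (c+3) = ! T (c+2) ∧ T (c+4) = ! T (c+3)) := by
  rintro ⟨h1, h2, h3, h4⟩
  rcases Nat.even_or_odd c with ⟨g, hg⟩ | ⟨g, hg⟩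
  · have hg2 : c = 2*g := by omega
    subst hg2
    rw [show 2*g+2 = 2*(g+1) by ring, T_even, show 2*g+1 = 2*g+1 from rfl, T_odd] at h2
    rw [show 2*g+4 = 2*(g+2) by ring, T_even, show 2*g+3 = 2*(g+1)+1 by ring, T_odd] at h4
    simp only [Bool.not_not] at h2 h4
    exact no3 g ⟨h2.symm, h4.symm⟩
  · subst hg
    rw [show 2*g+1+1 = 2*(g+1) by ring, T_even, T_odd] at h1
    rw [show 2*g+1+3 = 2*(g+2) by ring, T_even, show 2*g+1+2 = 2*(g+1)+1 by ring, T_odd] at h3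
    simp only [Bool.not_not] at h1 h3
    exact no3 g ⟨h1.symm, h3.symm⟩

lemma parity_aux (a b : ℕ) (ha : a % 2 = 0) (hb : b % 2 = 1)
    (h : ∀ x < 5, T (a+x) = T (b+x)) : False := by
  obtain ⟨al, hal⟩ : ∃ al, a = 2*al := ⟨a/2, by omega⟩
  obtain ⟨bl, hbl⟩ : ∃ bl, b = 2*bl+1 := ⟨b/2, by omega⟩
  subst hal hbl
  apply no5alt (2*al)
  have e1 : T (2*al+1) = ! T (2*al) := by
    rw [T_odd, T_even]
  have e3 : T (2*al+3) = ! T (2*al+2) := by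
    rw [show 2*al+3 = 2*(al+1)+1 by ring, T_odd, show 2*al+2 = 2*(al+1) by ring, T_even]
  have e2 : T (2*al+2) = ! T (2*al+1) := by
    rw [h 2 (by omega), h 1 (by omega)]
    rw [show 2*bl+1+2 = 2*(bl+1)+1 by ring, T_odd, show 2*bl+1+1 = 2*(bl+1) by ring, T_even]
  have e4 : T (2*al+4) = ! T (2*al+3) := by
    rw [h 4 (by omega), h 3 (by omega)]
    rw [show 2*bl+1+4 = 2*(bl+2)+1 by ring, T_odd, show 2*bl+1+3 = 2*(bl+2) by ring, T_even]
  exact ⟨e1, e2, e3, e4⟩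

lemma parityT (a b : ℕ) (h : ∀ x < 5, T (a+x) = T (b+x)) : a % 2 = b % 2 := by
  rcases Nat.even_or_odd a with ha | ha <;> rcases Nat.even_or_odd b with hb | hb
  · rw [Nat.even_iff] at ha hb; omega
  · exact absurd (parity_aux a b (Nat.even_iff.1 ha) (Nat.odd_iff.1 hb) h) (by simp)
  · exact absurd (parity_aux b a (Nat.even_iff.1 hb) (Nat.odd_iff.1 ha)
      (fun x hx => (h x hx).symm)) (by simp)
  · rw [Nat.odd_iff] at ha hb; omega

lemma syncT (k : ℕ) : ∀ a b L, 5 * 2^k ≤ L → (∀ x < L, T (a+x) = T (b+x)) →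
    a ≡ b [MOD 2^k] := by
  induction k with
  | zero => intro a b L _ _; simp [Nat.ModEq, Nat.mod_one]
  | succ k ih =>
    intro a b L hL h
    have hp1 : (1:ℕ) ≤ 2^(k+1) := Nat.one_le_two_pow
    have h5 : (5:ℕ) ≤ L := le_trans (by nlinarith) hL
    have hpar : a % 2 = b % 2 := parityT a b (fun x hx => h x (by omega))
    have h2k : (0:ℕ) < 2^k := Nat.two_pow_pos k
    rcases Nat.even_or_odd a with ha | ha
    · obtain ⟨al, hal⟩ : ∃ al, a = 2*al := ⟨a/2, by rw [Nat.even_iff] at ha; omega⟩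
      obtain ⟨bl, hbl⟩ : ∃ bl, b = 2*bl := ⟨b/2, by rw [Nat.even_iff] at ha; subst hal; omega⟩
      subst hal hbl
      have key : al ≡ bl [MOD 2^k] := by
        apply ih al bl (5*2^k) le_rfl
        intro x hx
        have := h (2*x) (by rw [pow_succ] at hL; omega)
        rwa [show 2*al+2*x = 2*(al+x) by ring, show 2*bl+2*x = 2*(bl+x) by ring,
          T_even, T_even] at this
      have := key.mul_left' (c := 2)
      rwa [show 2*2^k = 2^(k+1) by rw [pow_succ]; ring] at this
    · obtain ⟨al, hal⟩ : ∃ al, a = 2*al+1 := ⟨a/2, by rw [Nat.odd_iff] at ha; omega⟩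
      obtain ⟨bl, hbl⟩ : ∃ bl, b = 2*bl+1 := ⟨b/2, by rw [Nat.odd_iff] at ha; subst hal; omega⟩
      subst hal hbl
      have key : al+1 ≡ bl+1 [MOD 2^k] := by
        apply ih (al+1) (bl+1) (5*2^k) le_rfl
        intro x hx
        have := h (2*x+1) (by rw [pow_succ] at hL; omega)
        rwa [show 2*al+1+(2*x+1) = 2*(al+1+x) by ring,
          show 2*bl+1+(2*x+1) = 2*(bl+1+x) by ring, T_even, T_even] at this
      have key2 : al ≡ bl [MOD 2^k] := Nat.ModEq.add_right_cancel' 1 key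
      have := (key2.mul_left' (c := 2)).add_right 1
      rwa [show 2*2^k = 2^(k+1) by rw [pow_succ]; ring] at this

lemma fm_length (l : List Bool) : (l.flatMap fun b => [b, !b]).length = 2 * l.length := by
  induction l with
  | nil => simp
  | cons a l ih => simp [List.flatMap_cons, ih]; omega

lemma fm_get_even (l : List Bool) : ∀ q, (l.flatMap fun b => [b, !b])[2*q]? = l[q]? := by
  induction l with
  | nil => intro q; simp
  | cons a l ih =>
    intro q
    rcases q with _|q
    · simp [List.flatMap_cons]
    · rw [List.flatMap_cons]
      show (a :: (!a) :: (l.flatMap fun b => [b, !b]))[2*(q+1)]? = _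
      rw [show 2*(q+1) = (2*q)+1+1 by ring]
      simp only [List.getElem?_cons_succ]
      exact ih q

lemma fm_get_odd (l : List Bool) : ∀ q,
    (l.flatMap fun b => [b, !b])[2*q+1]? = Option.map (! ·) (l[q]?) := by
  induction l with
  | nil => intro q; simp
  | cons a l ih =>
    intro q
    rcases q with _|q
    · simp [List.flatMap_cons]
    · rw [List.flatMap_cons]
      show (a :: (!a) :: (l.flatMap fun b => [b, !b]))[2*(q+1)+1]? = _
      rw [show 2*(q+1)+1 = (2*q+1)+1+1 by ring]
      simp only [List.getElem?_cons_succ]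
      exact ih q

lemma tm_length (n : ℕ) : (tm n).length = 2^n := by
  induction n with
  | zero => rfl
  | succ n ih => rw [tm, fm_length, ih, pow_succ]; ring

lemma tm_get (n : ℕ) : ∀ x, x < 2^n → (tm n)[x]? = some (T x) := by
  induction n with
  | zero =>
    intro x hx
    interval_cases x
    · show some false = some (T 0)
      rw [T_zero]
  | succ n ih =>
    intro x hx
    rcases Nat.even_or_odd x with hp | hp
    · obtain ⟨q, hq⟩ : ∃ q, x = 2*q := ⟨x/2, by rw [Nat.even_iff] at hp; omega⟩
      subst hq
      rw [tm, fm_get_even, ih q (by rw [pow_succ] at hx; omega), T_even]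
    · obtain ⟨q, hq⟩ : ∃ q, x = 2*q+1 := ⟨x/2, by rw [Nat.odd_iff] at hp; omega⟩
      subst hq
      rw [tm, fm_get_odd, ih q (by rw [pow_succ] at hx; omega), T_odd]
      rfl

/- ========= list segment lemmas ========= -/
section Seg
variable {α : Type*}

lemma seg_extract {w w' : List α} {a b ℓ : ℕ}
    (h : (w.drop a).take ℓ = (w'.drop b).take ℓ) :
    ∀ t, t < ℓ → w[a+t]? = w'[b+t]? := by
  intro t ht
  have := congrArg (fun l => l[t]?) h
  simp only [List.getElem?_take_of_lt ht, List.getElem?_drop] at this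
  exact this

lemma seg_build {w w' : List α} {a b ℓ : ℕ}
    (h : ∀ t, t < ℓ → w[a+t]? = w'[b+t]?) :
    (w.drop a).take ℓ = (w'.drop b).take ℓ := by
  apply List.ext_getElem?
  intro t
  by_cases ht : t < ℓ
  · rw [List.getElem?_take_of_lt ht, List.getElem?_take_of_lt ht, List.getElem?_drop, List.getElem?_drop]
    exact h t ht
  · rw [List.getElem?_eq_none_iff.2, List.getElem?_eq_none_iff.2]
    · exact le_trans (List.length_take_le _ _) (by omega)
    · exact le_trans (List.length_take_le _ _) (by omega)
end Seg

/- ========= equivalence relation lemmas ========= -/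
section Eqv
open Relation

lemma eqv_congr {R : ℕ → ℕ → Prop} {x y z : ℕ} (hr : R x y) :
    EqvGen R x z ↔ EqvGen R y z :=
  ⟨fun h => (EqvGen.symm _ _ (EqvGen.rel _ _ hr)).trans _ _ _ h,
   fun h => (EqvGen.rel _ _ hr).trans _ _ _ h⟩

lemma eqv_bot {R : ℕ → ℕ → Prop} (hR : ∀ p q, ¬ R p q) {p q : ℕ}
    (h : EqvGen R p q) : p = q := by
  induction h with
  | rel x y hxy => exact absurd hxy (hR x y)
  | refl => rfl
  | symm x y _ ih => omega
  | trans x y z _ _ ih1 ih2 => omega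

lemma eqv_mod {R : ℕ → ℕ → Prop} {m : ℕ} (hR : ∀ p q, R p q → p ≡ q [MOD m])
    {p q : ℕ} (h : EqvGen R p q) : p ≡ q [MOD m] := by
  induction h with
  | rel x y hxy => exact hR x y hxy
  | refl => rfl
  | symm x y _ ih => exact ih.symm
  | trans x y z _ _ ih1 ih2 => exact ih1.trans ih2

lemma rem_split {R Rb Rt : ℕ → ℕ → Prop} (hs : ∀ p q, R p q → Rb p q ∨ Rt p q)
    {p q : ℕ} (h : EqvGen R p q) :
    EqvGen Rb p q ∨
    ((∃ x y, Rt x y ∧ (EqvGen Rb p x ∨ EqvGen Rb p y)) ∧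
     (∃ x y, Rt x y ∧ (EqvGen Rb q x ∨ EqvGen Rb q y))) := by
  induction h with
  | rel x y hxy =>
    rcases hs x y hxy with hb | ht
    · exact Or.inl (EqvGen.rel _ _ hb)
    · exact Or.inr ⟨⟨x, y, ht, Or.inl (EqvGen.refl x)⟩, ⟨x, y, ht, Or.inr (EqvGen.refl y)⟩⟩
  | refl x => exact Or.inl (EqvGen.refl x)
  | symm x y _ ih =>
    rcases ih with hb | ⟨h1, h2⟩
    · exact Or.inl (hb.symm _ _)
    · exact Or.inr ⟨h2, h1⟩
  | trans x y z _ _ ih1 ih2 =>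
    rcases ih1 with hb1 | ⟨h1, h2⟩
    · rcases ih2 with hb2 | ⟨h3, h4⟩
      · exact Or.inl (hb1.trans _ _ _ hb2)
      · refine Or.inr ⟨?_, h4⟩
        obtain ⟨u, v, ht, hc⟩ := h3
        exact ⟨u, v, ht, hc.imp (fun hh => hb1.trans _ _ _ hh) (fun hh => hb1.trans _ _ _ hh)⟩
    · rcases ih2 with hb2 | ⟨h3, h4⟩
      · refine Or.inr ⟨h1, ?_⟩
        obtain ⟨u, v, ht, hc⟩ := h2
        exact ⟨u, v, ht,
          hc.imp (fun hh => (hb2.symm _ _).trans _ _ _ hh) (fun hh => (hb2.symm _ _).trans _ _ _ hh)⟩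
      · exact Or.inr ⟨h1, h4⟩
end Eqv

/- ========= the position relation of an SES ========= -/
open Relation

/-- positions related by some equation of `E` whose length is at least `θ` -/
def ERel (E : SES Bool) (θ : ℕ) : ℕ → ℕ → Prop :=
  fun p q => ∃ e ∈ E.Eqs, θ ≤ e.2.2 ∧ ∃ t < e.2.2, p = e.1 + t ∧ q = e.2.1 + t

/-- endpoints of all equations in `F` -/
def Ends (F : Finset (ℕ × ℕ × ℕ)) : Finset ℕ :=
  F.biUnion (fun e => (Finset.range e.2.2).image (e.1 + ·) ∪ (Finset.range e.2.2).image (e.2.1 + ·))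

lemma card_Ends {F : Finset (ℕ × ℕ × ℕ)} {B : ℕ} (hB : ∀ e ∈ F, e.2.2 ≤ B) :
    (Ends F).card ≤ F.card * (2 * B) := by
  refine le_trans (Finset.card_biUnion_le) ?_
  refine le_trans (Finset.sum_le_card_nsmul _ _ (2*B) ?_) (by simp [mul_comm])
  intro e he
  refine le_trans (Finset.card_union_le _ _) ?_
  have h1 := Finset.card_image_le (s := Finset.range e.2.2) (f := (e.1 + ·))
  have h2 := Finset.card_image_le (s := Finset.range e.2.2) (f := (e.2.1 + ·))
  simp only [Finset.card_range] at h1 h2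
  have := hB e he
  omega

/-- every position is connected to a character-constraint position -/
lemma hitCh {n : ℕ} {E : SES Bool} (hv : E.valid) (hrep : E.represents (tm n)) :
    ∀ p, 1 ≤ p → p ≤ 2^n → ∃ q ∈ E.Ch.image Prod.fst, EqvGen (ERel E 0) p q := by
  classical
  intro p hp1 hp2
  by_contra hno
  push_neg at hno
  set N := 2^n with hN
  have hEn : E.n = N := by rw [← hrep.1.1, tm_length]
  set R := ERel E 0 with hR
  set w' : List Bool :=
    (List.range N).map (fun idx => if EqvGen R (idx+1) p then !(T idx) else T idx) with hw'
  have hget : ∀ x, x < N → w'[x]? = some (if EqvGen R (x+1) p then !(T x) else T x) := by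
    intro x hx
    rw [hw', List.getElem?_map, List.getElem?_range hx, Option.map_some]
  have hsat : E.sat w' := by
    refine ⟨by simp [hw', hEn], ?_, ?_⟩
    · intro e he
      obtain ⟨hi1, hj1, hl1, hiN, hjN⟩ := hv.1 e he
      apply seg_build
      intro t ht
      have hib : e.1 - 1 + t < N := by omega
      have hjb : e.2.1 - 1 + t < N := by omega
      rw [hget _ hib, hget _ hjb]
      have hrel : R (e.1 + t) (e.2.1 + t) := ⟨e, he, Nat.zero_le _, t, ht, rfl, rfl⟩
      have hflag : EqvGen R (e.1 - 1 + t + 1) p ↔ EqvGen R (e.2.1 - 1 + t + 1) p := by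
        rw [show e.1 - 1 + t + 1 = e.1 + t by omega, show e.2.1 - 1 + t + 1 = e.2.1 + t by omega]
        exact eqv_congr hrel
      have hT : T (e.1 - 1 + t) = T (e.2.1 - 1 + t) := by
        have := seg_extract (hrep.1.2.1 e he) t ht
        rw [tm_get n _ (by omega), tm_get n _ (by omega)] at this
        exact Option.some_injective _ this
      by_cases hc : EqvGen R (e.1 - 1 + t + 1) p
      · rw [if_pos hc, if_pos (hflag.1 hc), hT]
      · rw [if_neg hc, if_neg (fun hh => hc (hflag.2 hh)), hT]
    · intro kc hkc
      obtain ⟨hk1, hkN⟩ := hv.2 kc hkc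
      have hkb : kc.1 - 1 < N := by omega
      rw [hget _ hkb]
      have hflag : ¬ EqvGen R (kc.1 - 1 + 1) p := by
        rw [show kc.1 - 1 + 1 = kc.1 by omega]
        intro hh
        exact hno kc.1 (Finset.mem_image_of_mem Prod.fst hkc) (hh.symm _ _)
      rw [if_neg hflag]
      have := hrep.1.2.2 kc hkc
      rw [tm_get n _ (by omega)] at this
      rw [Option.some_injective _ this]
  have heq := hrep.2 w' hsat
  have h1 : w'[p-1]? = some (!(T (p-1))) := by
    rw [hget _ (by omega), if_pos]
    rw [show p - 1 + 1 = p by omega]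
    exact EqvGen.refl p
  rw [heq, tm_get n _ (by omega)] at h1
  exact (Bool.not_ne_self _ (Option.some_injective _ h1.symm)).elim

/- ========= tiny relation and threshold hitting ========= -/
def TRel (E : SES Bool) (θ : ℕ) : ℕ → ℕ → Prop :=
  fun p q => ∃ e ∈ E.Eqs, e.2.2 < θ ∧ ∃ t < e.2.2, p = e.1 + t ∧ q = e.2.1 + t

lemma trel_mem_ends {E : SES Bool} {θ x y : ℕ} (h : TRel E θ x y) :
    x ∈ Ends (E.Eqs.filter (fun e => e.2.2 < θ)) ∧
    y ∈ Ends (E.Eqs.filter (fun e => e.2.2 < θ)) := by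
  obtain ⟨e, he, hlt, t, ht, hx, hy⟩ := h
  constructor <;> rw [Ends, Finset.mem_biUnion] <;>
    refine ⟨e, Finset.mem_filter.2 ⟨he, hlt⟩, ?_⟩
  · exact Finset.mem_union_left _ (Finset.mem_image.2 ⟨t, Finset.mem_range.2 ht, hx.symm⟩)
  · exact Finset.mem_union_right _ (Finset.mem_image.2 ⟨t, Finset.mem_range.2 ht, hy.symm⟩)

lemma hit_theta {n : ℕ} {E : SES Bool} (hv : E.valid) (hrep : E.represents (tm n)) (θ : ℕ) :
    ∀ p, 1 ≤ p → p ≤ 2^n →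
    ∃ q ∈ (E.Ch.image Prod.fst) ∪ Ends (E.Eqs.filter (fun e => e.2.2 < θ)),
      EqvGen (ERel E θ) p q := by
  intro p hp1 hp2
  obtain ⟨q, hq, hpq⟩ := hitCh hv hrep p hp1 hp2
  have hsplit : ∀ x y, ERel E 0 x y → ERel E θ x y ∨ TRel E θ x y := by
    rintro x y ⟨e, he, -, t, ht, hx, hy⟩
    by_cases hθ : θ ≤ e.2.2
    · exact Or.inl ⟨e, he, hθ, t, ht, hx, hy⟩
    · exact Or.inr ⟨e, he, by omega, t, ht, hx, hy⟩
  rcases rem_split hsplit hpq with hb | ⟨⟨x, y, ht, hc⟩, -⟩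
  · exact ⟨q, Finset.mem_union_left _ hq, hb⟩
  · rcases hc with hcx | hcy
    · exact ⟨x, Finset.mem_union_right _ (trel_mem_ends ht).1, hcx⟩
    · exact ⟨y, Finset.mem_union_right _ (trel_mem_ends ht).2, hcy⟩

/- ========= synchronization for big equations ========= -/
lemma big_sync {n : ℕ} {E : SES Bool} (hv : E.valid) (hrep : E.represents (tm n))
    {k θ : ℕ} (hθ : 5 * 2^k ≤ θ) :
    ∀ p q, ERel E θ p q → p ≡ q [MOD 2^k] := by
  rintro p q ⟨e, he, hθl, t, ht, hp, hq⟩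
  obtain ⟨hi1, hj1, hl1, hiN, hjN⟩ := hv.1 e he
  have hEn : E.n = 2^n := by rw [← hrep.1.1, tm_length]
  have hTeq : ∀ x < e.2.2, T (e.1 - 1 + x) = T (e.2.1 - 1 + x) := by
    intro x hx
    have := seg_extract (hrep.1.2.1 e he) x hx
    rw [tm_get n _ (by omega), tm_get n _ (by omega)] at this
    exact Option.some_injective _ this
  have hmod : (e.1 - 1) ≡ (e.2.1 - 1) [MOD 2^k] :=
    syncT k _ _ e.2.2 (le_trans hθ hθl) hTeq
  have := hmod.add_right (1 + t)
  rw [show e.1 - 1 + (1 + t) = e.1 + t by omega, show e.2.1 - 1 + (1 + t) = e.2.1 + t by omega]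
    at this
  rw [hp, hq]
  exact this

/- ========= pigeonhole on residues ========= -/
lemma mod_hit_card {S : Finset ℕ} {m N : ℕ} (hm : 1 ≤ m) (hmN : m ≤ N)
    (h : ∀ p, 1 ≤ p → p ≤ N → ∃ q ∈ S, p ≡ q [MOD m]) : m ≤ S.card := by
  classical
  have hex : ∀ r ∈ Finset.range m, ∃ q, q ∈ S ∧ (r+1) ≡ q [MOD m] := by
    intro r hr
    have hr' := Finset.mem_range.1 hr
    obtain ⟨q, hq, hmod⟩ := h (r+1) (by omega) (by omega)
    exact ⟨q, hq, hmod⟩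
  have hex2 : ∀ r : ℕ, ∃ q, (r ∈ Finset.range m → q ∈ S ∧ (r+1) ≡ q [MOD m]) := by
    intro r
    by_cases hr : r ∈ Finset.range m
    · obtain ⟨q, hq⟩ := hex r hr
      exact ⟨q, fun _ => hq⟩
    · exact ⟨0, fun hh => absurd hh hr⟩
  have key : (Finset.range m).card ≤ S.card := by
    apply Finset.card_le_card_of_injOn (fun r => Classical.choose (hex2 r))
    · intro r hr
      exact ((Classical.choose_spec (hex2 r)) hr).1
    · intro r1 hr1 r2 hr2 hfeq
      simp only [Finset.coe_range, Set.mem_Iio] at hr1 hr2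
      have h1 := ((Classical.choose_spec (hex2 r1)) (Finset.mem_range.2 hr1)).2
      have h2 := ((Classical.choose_spec (hex2 r2)) (Finset.mem_range.2 hr2)).2
      simp only [] at hfeq
      rw [show Classical.choose (hex2 r1) = Classical.choose (hex2 r2) from hfeq] at h1
      have hmm : (r1 + 1) % m = (r2 + 1) % m := h1.trans h2.symm
      rcases Nat.lt_or_ge (r1+1) m with hlt1 | hge1 <;>
        rcases Nat.lt_or_ge (r2+1) m with hlt2 | hge2
      · rw [Nat.mod_eq_of_lt hlt1, Nat.mod_eq_of_lt hlt2] at hmm; omega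
      · have hh : r2 + 1 = m := by omega
        rw [Nat.mod_eq_of_lt hlt1, hh, Nat.mod_self] at hmm; omega
      · have hh : r1 + 1 = m := by omega
        rw [hh, Nat.mod_self, Nat.mod_eq_of_lt hlt2] at hmm; omega
      · omega
  simpa using key

/- ========= scale function ========= -/
def kap (l : ℕ) : ℕ := Nat.log2 (l / 5)

lemma kap_le (l : ℕ) : l ≤ 14 * 2 ^ (kap l) := by
  rw [kap]
  by_cases h : l / 5 = 0
  · rw [h]
    have : l ≤ 4 := by omega
    simp [Nat.log2]; omega
  · have h1 : l / 5 < 2 ^ (Nat.log2 (l/5) + 1) := Nat.lt_log2_self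
    have h2 : (1:ℕ) ≤ 2 ^ (Nat.log2 (l/5)) := Nat.one_le_two_pow
    rw [pow_succ] at h1
    omega

lemma kap_ge {l : ℕ} (h : 5 ≤ l) : 5 * 2 ^ (kap l) ≤ l := by
  rw [kap]
  have h0 : l / 5 ≠ 0 := by omega
  have h1 : 2 ^ (Nat.log2 (l/5)) ≤ l / 5 := Nat.log2_self_le h0
  omega

lemma kap_pos_ge {l : ℕ} (h : 1 ≤ kap l) : 5 ≤ l := by
  by_contra hh
  push_neg at hh
  have : l / 5 = 0 := by omega
  rw [kap, this] at h
  simp [Nat.log2] at h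

/- ========= constants ========= -/
def Gc (K : ℕ) : ℕ := Nat.log2 (K+1) + 7
def Fc (K : ℕ) : ℕ := K + 28 * (K+1) * 2 ^ ((K+2) * Gc K)

lemma Gc_big (K : ℕ) : 64 * (K+1) ≤ 2 ^ (Gc K) := by
  rw [Gc, pow_add]
  have h1 : K + 1 < 2 ^ (Nat.log2 (K+1) + 1) := Nat.lt_log2_self
  rw [pow_succ] at h1
  have : (K+1) ≤ 2 * 2 ^ (Nat.log2 (K+1)) := by omega
  calc 64 * (K+1) ≤ 64 * (2 * 2 ^ (Nat.log2 (K+1))) := by omega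
    _ = 2 ^ (Nat.log2 (K+1)) * 2^7 := by ring
    _ ≤ _ := le_rfl

/- ========= the main bound ========= -/
lemma main_bound {K n : ℕ} {E : SES Bool} (hv : E.valid) (hrep : E.represents (tm n))
    (hsz : E.size ≤ K) : 2^n ≤ Fc K := by
  classical
  set N := 2^n with hN
  have hEn : E.n = N := by rw [← hrep.1.1, tm_length]
  set e := E.Eqs.card with he'
  set c := E.Ch.card with hc'
  have he : e ≤ K := le_trans (Nat.le_add_right _ _) hsz
  have hc : c ≤ K := le_trans (Nat.le_add_left _ _) hsz
  have hcard_img : (E.Ch.image Prod.fst).card ≤ c := Finset.card_image_le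
  -- every equation length is ≤ N
  have hlen_le : ∀ eq ∈ E.Eqs, eq.2.2 ≤ N := by
    intro eq heq
    have := hv.1 eq heq
    omega
  set M := E.Eqs.sup (fun eq => eq.2.2) with hM'
  have hM : ∀ eq ∈ E.Eqs, eq.2.2 ≤ M := by
    intro eq heq
    rw [hM']
    exact Finset.le_sup (f := fun eq => eq.2.2) heq
  -- Step (a) : N ≤ c + e * (2*M)
  have stepA : N ≤ c + e * (2 * M) := by
    have hhit := hit_theta hv hrep (M+1)
    have hbot : ∀ x y, ¬ ERel E (M+1) x y := by
      rintro x y ⟨eq, heq, hge, -⟩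
      have := hM eq heq
      omega
    have hsub : ∀ p, 1 ≤ p → p ≤ N →
        p ∈ (E.Ch.image Prod.fst) ∪ Ends (E.Eqs.filter (fun eq => eq.2.2 < M+1)) := by
      intro p h1 h2
      obtain ⟨q, hq, hpq⟩ := hhit p h1 h2
      rwa [eqv_bot hbot hpq]
    have hsubset : Finset.Icc 1 N ⊆
        (E.Ch.image Prod.fst) ∪ Ends (E.Eqs.filter (fun eq => eq.2.2 < M+1)) := by
      intro p hp
      have := Finset.mem_Icc.1 hp
      exact hsub p this.1 this.2
    have hcard := Finset.card_le_card hsubset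
    rw [Nat.card_Icc] at hcard
    have hcard2 : (Ends (E.Eqs.filter (fun eq => eq.2.2 < M+1))).card ≤ e * (2*M) := by
      refine le_trans (card_Ends (B := M) ?_) ?_
      · intro eq heq
        exact hM eq (Finset.mem_filter.1 heq).1
      · have : (E.Eqs.filter (fun eq => eq.2.2 < M+1)).card ≤ e := Finset.card_filter_le _ _
        exact Nat.mul_le_mul_right _ this
    have := Finset.card_union_le (E.Ch.image Prod.fst)
      (Ends (E.Eqs.filter (fun eq => eq.2.2 < M+1)))
    omega
  set G := Gc K with hG'
  set km := E.Eqs.sup (fun eq => kap eq.2.2) with hkm'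
  by_cases hcase : km < (K+2) * G
  -- small case
  · have hMb : M ≤ 14 * 2 ^ ((K+2) * G) := by
      apply Finset.sup_le
      intro eq heq
      calc eq.2.2 ≤ 14 * 2 ^ (kap eq.2.2) := kap_le _
        _ ≤ 14 * 2 ^ km := by
            have : kap eq.2.2 ≤ km := by
              rw [hkm']
              exact Finset.le_sup (f := fun eq => kap eq.2.2) heq
            have := Nat.pow_le_pow_right (by norm_num : 1 ≤ 2) this
            omega
        _ ≤ 14 * 2 ^ ((K+2) * G) := by
            have := Nat.pow_le_pow_right (by norm_num : 1 ≤ 2) (le_of_lt hcase)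
            omega
    calc N ≤ c + e * (2 * M) := stepA
      _ ≤ K + K * (2 * (14 * 2 ^ ((K+2) * G))) := by
          have h1 : e * (2 * M) ≤ K * (2 * (14 * 2 ^ ((K+2)*G))) :=
            Nat.mul_le_mul he (by omega)
          omega
      _ ≤ Fc K := by
          rw [Fc]
          have : K * (2 * (14 * 2 ^ ((K+2)*G))) = 28 * K * 2 ^ ((K+2) * Gc K) := by
            rw [hG']; ring
          rw [this]
          have : 28 * K * 2 ^ ((K+2) * Gc K) ≤ 28 * (K+1) * 2 ^ ((K+2) * Gc K) := by
            apply Nat.mul_le_mul_right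
            omega
          omega
  -- big case : impossible
  · exfalso
    push_neg at hcase
    have hG1 : 7 ≤ G := by rw [hG', Gc]; omega
    have hGbig : 64 * (K+1) ≤ 2 ^ G := Gc_big K
    -- find a free window g* ∈ [1, e+1]
    have hkmsup : ∀ eq ∈ E.Eqs, kap eq.2.2 ≤ km := by
      intro eq heq
      rw [hkm']
      exact Finset.le_sup (f := fun eq => kap eq.2.2) heq
    have hkmbig : (e+2) * G ≤ km := by
      have h' : (e+2) * G ≤ (K+2) * G := Nat.mul_le_mul_right G (by omega)
      omega
    set occupied := (Finset.Icc 1 (e+1)).filter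
      (fun g => ∃ eq ∈ E.Eqs, km - g*G ≤ kap eq.2.2 ∧ kap eq.2.2 ≤ km - g*G + (G-1)) with hocc
    have hocc_card : occupied.card ≤ e := by
      have hwit : ∀ g ∈ occupied, ∃ eq, eq ∈ E.Eqs ∧
          km - g*G ≤ kap eq.2.2 ∧ kap eq.2.2 ≤ km - g*G + (G-1) := by
        intro g hg
        have := (Finset.mem_filter.1 hg).2
        obtain ⟨eq, heq, h1, h2⟩ := this
        exact ⟨eq, heq, h1, h2⟩
      have hex2 : ∀ g : ℕ, ∃ eq, (g ∈ occupied → eq ∈ E.Eqs ∧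
          km - g*G ≤ kap eq.2.2 ∧ kap eq.2.2 ≤ km - g*G + (G-1)) := by
        intro g
        by_cases hg : g ∈ occupied
        · obtain ⟨eq, heq⟩ := hwit g hg
          exact ⟨eq, fun _ => heq⟩
        · exact ⟨⟨0,0,0⟩, fun hh => absurd hh hg⟩
      apply Finset.card_le_card_of_injOn (fun g => Classical.choose (hex2 g))
      · intro g hg
        exact ((Classical.choose_spec (hex2 g)) hg).1
      · intro g1 hg1 g2 hg2 hfeq
        simp only [Finset.mem_coe] at hg1 hg2
        by_contra hne
        have h1 := (Classical.choose_spec (hex2 g1)) hg1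
        have h2 := (Classical.choose_spec (hex2 g2)) hg2
        rw [show Classical.choose (hex2 g1) = Classical.choose (hex2 g2) from hfeq] at h1
        have hb1 := (Finset.mem_Icc.1 (Finset.mem_filter.1 hg1).1)
        have hb2 := (Finset.mem_Icc.1 (Finset.mem_filter.1 hg2).1)
        -- windows are disjoint
        have hG0 : 1 ≤ G := by omega
        have hle1 : g1 * G ≤ km := by
          have hx : g1 * G ≤ (e+1) * G := Nat.mul_le_mul_right G (by omega)
          have hy : (e+1) * G ≤ (e+2) * G := Nat.mul_le_mul_right G (by omega)
          omega
        have hle2 : g2 * G ≤ km := by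
          have hx : g2 * G ≤ (e+1) * G := Nat.mul_le_mul_right G (by omega)
          have hy : (e+1) * G ≤ (e+2) * G := Nat.mul_le_mul_right G (by omega)
          omega
        rcases Nat.lt_or_ge g1 g2 with hlt | hge
        · have hz : (g1 + 1) * G ≤ g2 * G := Nat.mul_le_mul_right G (by omega)
          have hw : (g1 + 1) * G = g1 * G + G := by ring
          omega
        · have hlt : g2 < g1 := by omega
          have hz : (g2 + 1) * G ≤ g1 * G := Nat.mul_le_mul_right G (by omega)
          have hw : (g2 + 1) * G = g2 * G + G := by ring
          omega
    have : occupied.card < (Finset.Icc 1 (e+1)).card := by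
      rw [Nat.card_Icc]
      omega
    obtain ⟨g, hgIcc, hgfree⟩ : ∃ g ∈ Finset.Icc 1 (e+1), g ∉ occupied := by
      by_contra hh
      push_neg at hh
      have : (Finset.Icc 1 (e+1)).card ≤ occupied.card := Finset.card_le_card hh
      omega
    have hgap : ∀ eq ∈ E.Eqs, kap eq.2.2 < km - g*G ∨ km - g*G + (G-1) < kap eq.2.2 := by
      intro eq heq
      by_contra hh
      push_neg at hh
      exact hgfree (Finset.mem_filter.2 ⟨hgIcc, eq, heq, hh.1, hh.2⟩)
    set b := km - g * G with hb'
    have hgb := Finset.mem_Icc.1 hgIcc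
    have hgle : g * G ≤ km := by
      have hx : g * G ≤ (e+1) * G := Nat.mul_le_mul_right G (by omega)
      have hy : (e+1) * G ≤ (e+2) * G := Nat.mul_le_mul_right G (by omega)
      omega
    have hbG : G ≤ b := by
      have h1 : (e+2) * G = (e+1) * G + G := by ring
      have h2 : g * G ≤ (e+1) * G := Nat.mul_le_mul_right G (by omega)
      omega
    have hbtop : b + G ≤ km := by
      have h1 : 1 * G ≤ g * G := Nat.mul_le_mul_right G (by omega)
      have h2 : 1 * G = G := by ring
      omega
    set θ := 5 * 2 ^ (b + G) with hθ'
    -- tiny equations have length ≤ 7 * 2^b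
    have htiny : ∀ eq ∈ E.Eqs, eq.2.2 < θ → eq.2.2 ≤ 7 * 2 ^ b := by
      intro eq heq hlt
      rcases hgap eq heq with hsmall | hbig
      · have hkb : kap eq.2.2 ≤ b - 1 := by omega
        calc eq.2.2 ≤ 14 * 2 ^ (kap eq.2.2) := kap_le _
          _ ≤ 14 * 2 ^ (b-1) := by
              have := Nat.pow_le_pow_right (by norm_num : 1 ≤ 2) hkb
              omega
          _ ≤ 7 * 2 ^ b := by
              have : (2:ℕ) ^ b = 2 ^ (b-1) * 2 := by
                rw [← pow_succ]
                congr 1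
                omega
              omega
      · exfalso
        have hk1 : 1 ≤ kap eq.2.2 := by omega
        have h5 : 5 ≤ eq.2.2 := kap_pos_ge hk1
        have : 5 * 2 ^ (kap eq.2.2) ≤ eq.2.2 := kap_ge h5
        have hbig2 : b + G ≤ kap eq.2.2 := by omega
        have : (2:ℕ) ^ (b+G) ≤ 2 ^ (kap eq.2.2) := Nat.pow_le_pow_right (by norm_num) hbig2
        omega
    -- the modulus
    set m := 2 ^ (b + G) with hm'
    have hmN : m ≤ N := by
      -- some equation attains km ; its length is ≥ 5*2^km ≥ 2^km ≥ m
      have hne : E.Eqs.Nonempty := by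
        by_contra hh
        rw [Finset.not_nonempty_iff_eq_empty] at hh
        rw [hkm', hh] at hkmbig
        simp [Finset.sup_empty] at hkmbig
        omega
      obtain ⟨eq0, heq0, hkeq0⟩ := Finset.exists_mem_eq_sup E.Eqs hne (fun eq => kap eq.2.2)
      have hkm_eq : km = kap eq0.2.2 := hkeq0
      have hkb2 : (e+2) * G ≤ kap eq0.2.2 := hkm_eq ▸ hkmbig
      have h1 : 1 ≤ kap eq0.2.2 := by omega
      have h5 : 5 ≤ eq0.2.2 := kap_pos_ge h1
      have h2 : 5 * 2 ^ (kap eq0.2.2) ≤ eq0.2.2 := kap_ge h5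
      have h3 : eq0.2.2 ≤ N := hlen_le eq0 heq0
      have h4 : (2:ℕ)^(b+G) ≤ 2 ^ (kap eq0.2.2) := by
        apply Nat.pow_le_pow_right (by norm_num)
        omega
      omega
    have hm1 : 1 ≤ m := Nat.one_le_two_pow
    -- hitting with threshold θ
    have hhit := hit_theta hv hrep θ
    have hsync := big_sync hv hrep (k := b + G) (θ := θ) le_rfl
    have hmod_hit : ∀ p, 1 ≤ p → p ≤ N → ∃ q ∈ (E.Ch.image Prod.fst) ∪
        Ends (E.Eqs.filter (fun eq => eq.2.2 < θ)), p ≡ q [MOD m] := by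
      intro p h1 h2
      obtain ⟨q, hq, hpq⟩ := hhit p h1 h2
      exact ⟨q, hq, eqv_mod hsync hpq⟩
    have hcount := mod_hit_card hm1 hmN hmod_hit
    have hends : (Ends (E.Eqs.filter (fun eq => eq.2.2 < θ))).card ≤ e * (2 * (7 * 2^b)) := by
      refine le_trans (card_Ends (B := 7 * 2^b) ?_) ?_
      · intro eq heq
        have hmem := Finset.mem_filter.1 heq
        exact htiny eq hmem.1 hmem.2
      · exact Nat.mul_le_mul_right _ (Finset.card_filter_le _ _)
    have hconv2 : e * (2 * (7 * 2 ^ b)) = e * (14 * 2 ^ b) := by ring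
    have hScard : ((E.Ch.image Prod.fst) ∪
        Ends (E.Eqs.filter (fun eq => eq.2.2 < θ))).card ≤ c + e * (14 * 2^b) := by
      have := Finset.card_union_le (E.Ch.image Prod.fst)
        (Ends (E.Eqs.filter (fun eq => eq.2.2 < θ)))
      omega
    -- final contradiction : 2^b * 2^G ≤ c + 14 e 2^b  but 2^G ≥ 64(K+1)
    have hconv : e * (2 * (7 * 2 ^ b)) = e * (14 * 2 ^ b) := by ring
    have hpow : (2:ℕ)^(b+G) = 2^b * 2^G := pow_add 2 b G
    have hfin : 2 ^ b * 2 ^ G ≤ c + e * (14 * 2 ^ b) := by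
      rw [hm'] at hcount
      omega
    have hbig2 : 64 * (K+1) * 2 ^ b ≤ 2 ^ b * 2 ^ G := by
      calc 64 * (K+1) * 2^b ≤ 2^G * 2^b := Nat.mul_le_mul_right _ hGbig
        _ = 2^b * 2^G := by ring
    have h2b : 2^G ≤ 2 ^ b := Nat.pow_le_pow_right (by norm_num) hbG
    have hKb : K < 2 ^ b := by
      have : 64 * (K+1) ≤ 2 ^ b := le_trans hGbig h2b
      omega
    have he14 : e * (14 * 2^b) ≤ 14 * (K * 2^b) := by
      have hx : e * (14 * 2^b) = 14 * e * 2^b := by ring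
      have hy : 14 * e * 2^b ≤ 14 * K * 2^b :=
        Nat.mul_le_mul_right (2^b) (by omega)
      have hz : 14 * K * 2^b = 14 * (K * 2^b) := by ring
      omega
    have e1 : 64 * (K+1) * 2^b = 64 * (K * 2^b) + 64 * 2^b := by ring
    have e2 : K * 2^b ≤ 2^b * 2^b := Nat.mul_le_mul_right (2^b) (by omega)
    omega

/- ========= trivial SES : representability ========= -/
lemma sval_set_nonempty (n : ℕ) :
    {k | ∃ E : SES Bool, E.valid ∧ E.represents (tm n) ∧ E.size = k}.Nonempty := by
  classical
  set N := 2^n with hN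
  set E0 : SES Bool := ⟨N, ∅, (Finset.range N).image (fun x => (x+1, T x))⟩ with hE0
  have hEn : E0.n = N := rfl
  have hEe : E0.Eqs = ∅ := rfl
  have hEc : E0.Ch = (Finset.range N).image (fun x => (x+1, T x)) := rfl
  refine ⟨E0.size, E0, ⟨?_, ?_⟩, ⟨⟨?_, ?_, ?_⟩, ?_⟩, rfl⟩
  · intro e he
    rw [hEe] at he
    simp at he
  · intro kc hkc
    rw [hEc] at hkc
    simp only [Finset.mem_image, Finset.mem_range] at hkc
    obtain ⟨x, hx, hkc⟩ := hkc
    rw [← hkc, hEn]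
    simp
    omega
  · rw [hEn, tm_length]
  · intro e he
    rw [hEe] at he
    simp at he
  · intro kc hkc
    rw [hEc] at hkc
    simp only [Finset.mem_image, Finset.mem_range] at hkc
    obtain ⟨x, hx, hkc⟩ := hkc
    rw [← hkc]
    simp only
    rw [Nat.add_sub_cancel]
    exact tm_get n x hx
  · intro w' hw'
    apply List.ext_getElem?
    intro t
    have hlen' : w'.length = N := by rw [hw'.1, hEn]
    by_cases ht : t < N
    · have h1 := hw'.2.2 (t+1, T t) (by
        rw [hEc]
        simp only [Finset.mem_image, Finset.mem_range]
        exact ⟨t, ht, rfl⟩)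
      simp only [Nat.add_sub_cancel] at h1
      rw [h1, tm_get n t ht]
    · rw [List.getElem?_eq_none_iff.2, List.getElem?_eq_none_iff.2]
      · rw [tm_length]; omega
      · omega

/- ========= divergence of sVal ========= -/
lemma sval_tendsto : Filter.Tendsto (fun n => sVal (tm n)) Filter.atTop Filter.atTop := by
  rw [Filter.tendsto_atTop_atTop]
  intro K
  refine ⟨Fc K + 1, fun n hn => ?_⟩
  by_contra hlt
  push_neg at hlt
  have hmem : sVal (tm n) ∈ {k | ∃ E : SES Bool, E.valid ∧ E.represents (tm n) ∧ E.size = k} :=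
    Nat.sInf_mem (sval_set_nonempty n)
  obtain ⟨E, hv, hrep, hsize⟩ := hmem
  have hb := main_bound hv hrep (K := K) (by omega)
  have h2 : n < 2^n := Nat.lt_two_pow_self
  omega

section SegA
variable {α : Type*}
lemma seg_extract' {w u : List α} {a ℓ : ℕ}
    (h : (w.drop a).take ℓ = u) :
    ∀ t, t < ℓ → w[a+t]? = u[t]? := by
  intro t ht
  have := congrArg (fun l => l[t]?) h
  simp only [List.getElem?_take_of_lt ht, List.getElem?_drop] at this
  exact this

lemma infix_exists {u w : List α} (h : u <:+: w) :
    ∃ s, s + u.length ≤ w.length ∧ (w.drop s).take u.length = u := by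
  obtain ⟨s, t, hst⟩ := h
  refine ⟨s.length, ?_, ?_⟩
  · have := congrArg List.length hst
    simp at this
    omega
  · rw [← hst, List.append_assoc, List.drop_left, List.take_append_of_le_length le_rfl,
      List.take_length]

lemma exists_infix {w : List α} {s m : ℕ} (h : s + m ≤ w.length) :
    (w.drop s).take m <:+: w := by
  refine ⟨w.take s, (w.drop s).drop m, ?_⟩
  rw [List.append_assoc, List.take_append_drop, List.take_append_drop]
end SegA

/- ========= the doubling morphism ========= -/
def mu (w : List Bool) : List Bool := w.flatMap (fun b => [b, !b])

lemma mu_length (l : List Bool) : (mu l).length = 2 * l.length := by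
  induction l with
  | nil => simp [mu]
  | cons a l ih => simp [mu, List.flatMap_cons] at ih ⊢; omega

lemma mu_append (l₁ l₂ : List Bool) : mu (l₁ ++ l₂) = mu l₁ ++ mu l₂ :=
  List.flatMap_append

lemma mu_get_even (l : List Bool) : ∀ q, (mu l)[2*q]? = l[q]? := by
  induction l with
  | nil => intro q; simp [mu]
  | cons a l ih =>
    intro q
    rcases q with _|q
    · simp [mu, List.flatMap_cons]
    · rw [mu, List.flatMap_cons]
      show (a :: (!a) :: mu l)[2*(q+1)]? = _
      rw [show 2*(q+1) = (2*q)+1+1 by ring]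
      simp only [List.getElem?_cons_succ]
      exact ih q

lemma mu_get_odd (l : List Bool) : ∀ q, (mu l)[2*q+1]? = Option.map (! ·) (l[q]?) := by
  induction l with
  | nil => intro q; simp [mu]
  | cons a l ih =>
    intro q
    rcases q with _|q
    · simp [mu, List.flatMap_cons]
    · rw [mu, List.flatMap_cons]
      show (a :: (!a) :: mu l)[2*(q+1)+1]? = _
      rw [show 2*(q+1)+1 = (2*q+1)+1+1 by ring]
      simp only [List.getElem?_cons_succ]
      exact ih q

/-- drop an even number of positions commutes with `mu` -/
lemma mu_drop (w : List Bool) (a : ℕ) (ha : a ≤ w.length) :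
    (mu w).drop (2*a) = mu (w.drop a) := by
  conv_lhs => rw [← List.take_append_drop a w]
  rw [mu_append]
  have hl : (mu (w.take a)).length = 2*a := by
    rw [mu_length, List.length_take]
    omega
  rw [← hl, List.drop_left]

/-- decoding at even positions -/
lemma decode_even {w v : List Bool} {A h m : ℕ} (hocc : (w.drop A).take h = v)
    (hA : A + h ≤ w.length) (hm : m ≤ 2*h) :
    ((mu w).drop (2*A)).take m = (mu v).take m := by
  rw [mu_drop w A (by omega)]
  conv_lhs => rw [← List.take_append_drop h (w.drop A), hocc, mu_append]
  rw [List.take_append_of_le_length]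
  rw [mu_length]
  have hv : v.length = h := by
    rw [← hocc, List.length_take, List.length_drop]
    omega
  omega

/-- decoding at odd positions -/
lemma decode_odd {w v : List Bool} {A h m : ℕ} (hocc : (w.drop A).take h = v)
    (hA : A + h ≤ w.length) (hm : m + 1 ≤ 2*h) :
    ((mu w).drop (2*A+1)).take m = ((mu v).drop 1).take m := by
  have hv : v.length = h := by
    rw [← hocc, List.length_take, List.length_drop]
    omega
  have h1 : (mu w).drop (2*A+1) = ((mu w).drop (2*A)).drop 1 := by
    rw [List.drop_drop]
  rw [h1, mu_drop w A (by omega)]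
  conv_lhs => rw [← List.take_append_drop h (w.drop A), hocc, mu_append]
  rw [List.drop_append_of_le_length (by rw [mu_length]; omega)]
  rw [List.take_append_of_le_length]
  rw [List.length_drop, mu_length]
  omega

/- ========= the strengthened attractor invariant ========= -/
def Pinv (w : List Bool) (Γ : Finset ℕ) : Prop :=
  (∀ p ∈ Γ, 1 ≤ p ∧ p + 1 ≤ w.length) ∧
  (∀ x y : Bool, ∃ p ∈ Γ, w[p-1]? = some x ∧ w[p]? = some y) ∧
  (∀ u : List Bool, 2 ≤ u.length → u <:+: w →
    ∃ i, occursAt w u i ∧ ∃ p ∈ Γ, i ≤ p ∧ p ≤ i + u.length - 2)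

lemma seg_two {w : List Bool} {a : ℕ} {c0 c1 : Bool}
    (h0 : w[a]? = some c0) (h1 : w[a+1]? = some c1) :
    (w.drop a).take 2 = [c0, c1] := by
  have : (w.drop a).take 2 = (([c0, c1].drop 0).take 2 : List Bool) := by
    apply seg_build
    intro t ht
    interval_cases t
    · simpa using h0
    · simpa using h1
  simpa using this

lemma pinv_step {w : List Bool} {Γ : Finset ℕ} (h : Pinv w Γ) :
    Pinv (mu w) (Γ.image (fun p => 2*p)) := by
  obtain ⟨hP1, hP2, hP3⟩ := h
  -- the four patterns at doubled positions
  have hpat : ∀ x y : Bool, ∃ p ∈ Γ, (mu w)[2*p-1]? = some x ∧ (mu w)[2*p]? = some y := by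
    intro x y
    obtain ⟨p, hp, hx, hy⟩ := hP2 (!x) y
    obtain ⟨hp1, hp2⟩ := hP1 p hp
    refine ⟨p, hp, ?_, ?_⟩
    · have := mu_get_odd w (p-1)
      rw [show 2*(p-1)+1 = 2*p-1 by omega] at this
      rw [this, hx]
      simp
    · rw [mu_get_even w p, hy]
  refine ⟨?_, ?_, ?_⟩
  · intro p' hp'
    obtain ⟨p, hp, rfl⟩ := Finset.mem_image.1 hp'
    obtain ⟨hp1, hp2⟩ := hP1 p hp
    rw [mu_length]
    omega
  · intro x y
    obtain ⟨p, hp, hx, hy⟩ := hpat x y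
    exact ⟨2*p, Finset.mem_image_of_mem _ hp, by rwa [show 2*p-1 = 2*p-1 from rfl] at hx, hy⟩
  · intro u hu2 hinf
    set m := u.length with hm'
    obtain ⟨s, hsb, hsu⟩ := infix_exists hinf
    rw [mu_length] at hsb
    by_cases hm2 : m = 2
    -- length-2 factors: directly from the patterns
    · obtain ⟨c0, c1, hu⟩ := List.length_eq_two.1 (by omega : u.length = 2)
      have hc0 : (mu w)[s]? = some c0 := by
        have := seg_extract' hsu 0 (by omega)
        rw [hu] at this
        simpa using this
      have hc1 : (mu w)[s+1]? = some c1 := by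
        have := seg_extract' hsu 1 (by omega)
        rw [hu] at this
        simpa using this
      obtain ⟨p, hp, hx, hy⟩ := hpat c0 c1
      obtain ⟨hp1, hp2⟩ := hP1 p hp
      have hseg : ((mu w).drop (2*p-1)).take 2 = [c0, c1] :=
        seg_two (by rwa [show 2*p-1 = 2*p-1 from rfl])
          (by rwa [show 2*p-1+1 = 2*p by omega])
      refine ⟨2*p, ⟨by omega, ?_, ?_⟩, 2*p, Finset.mem_image_of_mem _ hp, by omega, by omega⟩
      · rw [mu_length, ← hm']
        omega
      · rw [← hm', hm2, show 2*p - 1 = 2*p-1 from rfl, hseg, hu]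
    -- length ≥ 3 factors: decode
    · have hm3 : 3 ≤ m := by omega
      rcases Nat.even_or_odd s with hs | hs
      · -- even start
        obtain ⟨A, rfl⟩ : ∃ A, s = 2*A := ⟨s/2, by rw [Nat.even_iff] at hs; omega⟩
        set h := (m+1)/2 with hh'
        have hAh : A + h ≤ w.length := by omega
        set v := (w.drop A).take h with hv'
        have hvlen : v.length = h := by
          rw [hv', List.length_take, List.length_drop]; omega
        have hm2h : m ≤ 2*h := by omega
        have hu_eq : u = (mu v).take m := by
          rw [← hsu]
          exact decode_even hv'.symm hAh hm2h
        have hvinf : v <:+: w := exists_infix (by omega)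
        obtain ⟨i₁, hocc₁, p, hp, hip, hpe⟩ := hP3 v (by omega) hvinf
        obtain ⟨hi1, hib, hiv⟩ := hocc₁
        rw [hvlen] at hib
        set A₁ := i₁ - 1 with hA₁'
        have hiv' : (w.drop A₁).take h = v := by
          rw [← hiv, hvlen]
        have hocc_u : ((mu w).drop (2*A₁)).take m = u := by
          rw [decode_even hiv' (by omega) hm2h, ← hu_eq]
        refine ⟨2*A₁+1, ⟨by omega, ?_, ?_⟩, 2*p, Finset.mem_image_of_mem _ hp, by omega, by omega⟩
        · rw [mu_length, ← hm']
          omega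
        · rw [← hm', show 2*A₁+1-1 = 2*A₁ by omega]
          exact hocc_u
      · -- odd start
        obtain ⟨A, rfl⟩ : ∃ A, s = 2*A+1 := ⟨s/2, by rw [Nat.odd_iff] at hs; omega⟩
        set h := (m+2)/2 with hh'
        have hAh : A + h ≤ w.length := by omega
        set v := (w.drop A).take h with hv'
        have hvlen : v.length = h := by
          rw [hv', List.length_take, List.length_drop]; omega
        have hm2h : m + 1 ≤ 2*h := by omega
        have hu_eq : u = ((mu v).drop 1).take m := by
          rw [← hsu]
          exact decode_odd hv'.symm hAh hm2h
        have hvinf : v <:+: w := exists_infix (by omega)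
        obtain ⟨i₁, hocc₁, p, hp, hip, hpe⟩ := hP3 v (by omega) hvinf
        obtain ⟨hi1, hib, hiv⟩ := hocc₁
        rw [hvlen] at hib
        set A₁ := i₁ - 1 with hA₁'
        have hiv' : (w.drop A₁).take h = v := by
          rw [← hiv, hvlen]
        have hocc_u : ((mu w).drop (2*A₁+1)).take m = u := by
          rw [decode_odd hiv' (by omega) hm2h, ← hu_eq]
        refine ⟨2*A₁+2, ⟨by omega, ?_, ?_⟩, 2*p, Finset.mem_image_of_mem _ hp, by omega, by omega⟩
        · rw [mu_length, ← hm']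
          omega
        · rw [← hm', show 2*A₁+2-1 = 2*A₁+1 by omega]
          exact hocc_u

lemma pinv_attractor {w : List Bool} {Γ : Finset ℕ} (h : Pinv w Γ) : IsAttractor w Γ := by
  obtain ⟨hP1, hP2, hP3⟩ := h
  constructor
  · intro p hp
    have := hP1 p hp
    omega
  · intro u hne hinf
    rcases Nat.lt_or_ge u.length 2 with hu | hu
    · have hu1 : u.length = 1 := by
        rcases u with _|⟨c, l⟩
        · simp at hne
        · simp only [List.length_cons] at hu ⊢
          omega
      obtain ⟨c, hc⟩ := List.length_eq_one_iff.1 hu1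
      obtain ⟨p, hp, hx, -⟩ := hP2 c true
      obtain ⟨hp1, hp2⟩ := hP1 p hp
      have hseg : (w.drop (p-1)).take 1 = [c] := by
        have : (w.drop (p-1)).take 1 = ([c].drop 0).take 1 := by
          apply seg_build
          intro t ht
          interval_cases t
          simpa using hx
        simpa using this
      refine ⟨p, ⟨hp1, by rw [hu1]; omega, by rw [hu1, hc]; exact hseg⟩,
        p, hp, le_rfl, by rw [hu1]; omega⟩
    · obtain ⟨i, hocc, p, hp, h1, h2⟩ := hP3 u hu hinf
      exact ⟨i, hocc, p, hp, h1, by omega⟩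

/- ========= decidable bridges ========= -/
lemma pinv_of_check {w : List Bool} {Γ : Finset ℕ} {N : ℕ} (hN : w.length = N)
    (h1 : ∀ p ∈ Γ, 1 ≤ p ∧ p + 1 ≤ N)
    (h2 : ∀ x y : Bool, ∃ p ∈ Γ, w[p-1]? = some x ∧ w[p]? = some y)
    (h3 : ∀ s ∈ Finset.range N, ∀ m ∈ Finset.Icc 2 (N - s), ∃ a ∈ Finset.range N, ∃ p ∈ Γ,
      a + m ≤ N ∧ (w.drop a).take m = (w.drop s).take m ∧ a + 1 ≤ p ∧ p ≤ a + m - 1) :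
    Pinv w Γ := by
  refine ⟨fun p hp => by rw [hN]; exact h1 p hp, h2, ?_⟩
  intro u hu2 hinf
  obtain ⟨s, hsb, hsu⟩ := infix_exists hinf
  set m := u.length with hm'
  rw [hN] at hsb
  obtain ⟨a, ha, p, hp, hab, hEq, hp1, hp2⟩ :=
    h3 s (Finset.mem_range.2 (by omega)) m (Finset.mem_Icc.2 (by omega))
  refine ⟨a+1, ⟨by omega, by rw [hN]; omega, ?_⟩, p, hp, by omega, by omega⟩
  rw [show a+1-1 = a by omega, ← hm', hEq, hsu]

lemma attr_of_check {w : List Bool} {Γ : Finset ℕ} {N : ℕ} (hN : w.length = N)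
    (h1 : ∀ p ∈ Γ, 1 ≤ p ∧ p ≤ N)
    (h3 : ∀ s ∈ Finset.range N, ∀ m ∈ Finset.Icc 1 (N - s), ∃ a ∈ Finset.range N, ∃ p ∈ Γ,
      a + m ≤ N ∧ (w.drop a).take m = (w.drop s).take m ∧ a + 1 ≤ p ∧ p ≤ a + m) :
    IsAttractor w Γ := by
  refine ⟨fun p hp => by rw [hN]; exact h1 p hp, ?_⟩
  intro u hne hinf
  obtain ⟨s, hsb, hsu⟩ := infix_exists hinf
  set m := u.length with hm'
  have hm1 : 1 ≤ m := List.length_pos_iff.2 hne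
  rw [hN] at hsb
  obtain ⟨a, ha, p, hp, hab, hEq, hp1, hp2⟩ :=
    h3 s (Finset.mem_range.2 (by omega)) m (Finset.mem_Icc.2 (by omega))
  refine ⟨a+1, ⟨by omega, by rw [hN]; omega, ?_⟩, p, hp, by omega, by omega⟩
  rw [show a+1-1 = a by omega, ← hm', hEq, hsu]

/- ========= base cases by computation ========= -/
lemma pinv_base : Pinv (tm 4) ({4, 6, 8, 12} : Finset ℕ) := by
  exact pinv_of_check (N := 16) (by decide) (by decide) (by decide) (by decide)

lemma pinv_tm (k : ℕ) : ∃ Γ : Finset ℕ, Pinv (tm (4+k)) Γ ∧ Γ.card ≤ 4 := by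
  induction k with
  | zero => exact ⟨{4, 6, 8, 12}, pinv_base, by decide⟩
  | succ k ih =>
    obtain ⟨Γ, hΓ, hc⟩ := ih
    refine ⟨Γ.image (fun p => 2*p), ?_, le_trans Finset.card_image_le hc⟩
    have hstep := pinv_step hΓ
    have : tm (4+(k+1)) = mu (tm (4+k)) := by
      rw [show 4+(k+1) = (4+k)+1 by omega, tm, mu]
    rw [this]
    exact hstep

lemma gamma_le_of_attr {w : List Bool} {Γ : Finset ℕ} (h : IsAttractor w Γ)
    (hc : Γ.card ≤ 4) : gammaVal w ≤ 4 :=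
  le_trans (Nat.sInf_le ⟨Γ, h, rfl⟩) hc

lemma partA : ∀ n, gammaVal (tm n) ≤ 4 := by
  intro n
  match n with
  | 0 =>
    refine gamma_le_of_attr (Γ := {1}) ?_ (by decide)
    exact attr_of_check (N := 1) (by decide) (by decide) (by decide)
  | 1 =>
    refine gamma_le_of_attr (Γ := {1, 2}) ?_ (by decide)
    exact attr_of_check (N := 2) (by decide) (by decide) (by decide)
  | 2 =>
    refine gamma_le_of_attr (Γ := {1, 3}) ?_ (by decide)
    exact attr_of_check (N := 4) (by decide) (by decide) (by decide)
  | 3 =>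
    refine gamma_le_of_attr (Γ := {1, 3, 6}) ?_ (by decide)
    exact attr_of_check (N := 8) (by decide) (by decide) (by decide)
  | (k+4) =>
    obtain ⟨Γ, hΓ, hc⟩ := pinv_tm k
    rw [show k+4 = 4+k by omega]
    exact gamma_le_of_attr (pinv_attractor hΓ) hc


/- ========= part C : the ratio tends to zero ========= -/
lemma partC (hA : ∀ n, gammaVal (tm n) ≤ 4)
    (hB : Filter.Tendsto (fun n => sVal (tm n)) Filter.atTop Filter.atTop) :
    Filter.Tendsto (fun n => (gammaVal (tm n) : ℝ) / (sVal (tm n) : ℝ))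
      Filter.atTop (nhds 0) := by
  have h4 : Filter.Tendsto (fun n => (4:ℝ) / (sVal (tm n) : ℝ)) Filter.atTop (nhds 0) :=
    Filter.Tendsto.div_atTop tendsto_const_nhds (tendsto_natCast_atTop_atTop.comp hB)
  apply squeeze_zero (fun n => div_nonneg (Nat.cast_nonneg _) (Nat.cast_nonneg _))
    (fun n => ?_) h4
  rcases eq_or_lt_of_le (Nat.cast_nonneg (α := ℝ) (sVal (tm n))) with hz | hz
  · rw [← hz, div_zero, div_zero]
  · apply (div_le_div_iff_of_pos_right hz).2
    exact_mod_cast hA n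

theorem stmt8 :
    (∀ n, gammaVal (tm n) ≤ 4) ∧
    Filter.Tendsto (fun n => sVal (tm n)) Filter.atTop Filter.atTop ∧
    Filter.Tendsto (fun n => (gammaVal (tm n) : ℝ) / (sVal (tm n) : ℝ))
      Filter.atTop (nhds 0) := by
  exact ⟨partA, sval_tendsto, partC partA sval_tendsto⟩
end

section
/- With ≡_χ the equivalence relation on positions of w generated from super-maximal right extensions (as in Definition of position equivalence by suffixient sets), for all positions i, j of w: i ≡_χ j if and only if w[i] = w[j]. In particular, the number of equivalence classes of ≡_χ equals σ(w), the number of distinct characters of w. -/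
set_option maxHeartbeats 1000000

section ChiAux

open List

variable {α : Type*}

/-- 0-indexed occurrence -/
def Occ (w u : List α) (p : ℕ) : Prop :=
  p + u.length ≤ w.length ∧ (w.drop p).take u.length = u

lemma Occ.toOccursAt {w u : List α} {p : ℕ} (h : Occ w u p) : occursAt w u (p + 1) :=
  ⟨Nat.le_add_left 1 p, by have := h.1; omega, by simpa using h.2⟩

lemma occursAt_toOcc {w u : List α} {i : ℕ} (h : occursAt w u i) : Occ w u (i - 1) :=
  ⟨by have := h.2.1; have := h.1; omega, h.2.2⟩

lemma infix_iff_occ {w u : List α} : u <:+: w ↔ ∃ p, Occ w u p := by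
  constructor
  · rintro ⟨s, t, rfl⟩
    refine ⟨s.length, ?_, ?_⟩
    · simp [List.length_append]
    · rw [List.append_assoc, List.drop_left, List.take_left]
  · rintro ⟨p, hlen, htake⟩
    refine ⟨w.take p, (w.drop p).drop u.length, ?_⟩
    conv_rhs => rw [← List.take_append_drop p w]
    rw [List.append_assoc]
    congr 1
    conv_rhs => rw [← List.take_append_drop u.length (w.drop p)]
    rw [htake]

lemma Occ.get {w u : List α} {p k : ℕ} (h : Occ w u p) (hk : k < u.length) :
    w[p + k]? = u[k]? := by
  conv_rhs => rw [← h.2]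
  rw [List.getElem?_take_of_lt hk, List.getElem?_drop]

lemma Occ.of_prefix {w u v : List α} {p : ℕ} (h : Occ w u p) (hv : v <+: u) : Occ w v p := by
  obtain ⟨b, rfl⟩ := hv
  have h1 := h.1
  rw [List.length_append] at h1
  refine ⟨by omega, ?_⟩
  have h2 : (w.drop p).take v.length = ((w.drop p).take (v.length + b.length)).take v.length := by
    rw [List.take_take]
    congr 1
    omega
  rw [h2, ← List.length_append (as := v) (bs := b), h.2, List.take_left]

lemma Occ.of_suffix {w u v : List α} {p : ℕ} (h : Occ w u p) (hv : v <:+ u) :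
    Occ w v (p + u.length - v.length) := by
  obtain ⟨a, rfl⟩ := hv
  have h1 := h.1
  rw [List.length_append] at h1
  have hp : p + (a ++ v).length - v.length = p + a.length := by
    rw [List.length_append]; omega
  rw [hp]
  refine ⟨by omega, ?_⟩
  have h2 : (w.drop p).take (a.length + v.length) = a ++ v := by
    have := h.2; rwa [List.length_append] at this
  have h3 : (w.drop (p + a.length)).take v.length
      = List.drop a.length ((w.drop p).take (a.length + v.length)) := by
    rw [List.drop_take, List.drop_drop]
    congr 1
    omega
  rw [h3, h2, List.drop_left]

lemma Occ.of_prefix_drop {w x : List α} {p : ℕ} (hp : p ≤ w.length) (h : x <+: w.drop p) :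
    Occ w x p := by
  obtain ⟨t, ht⟩ := h
  constructor
  · have := congrArg List.length ht
    rw [List.length_append, List.length_drop] at this
    omega
  · rw [← ht, List.take_left]

lemma RightExt.infix {w u : List α} (h : RightExt w u) : u <:+: w := by
  obtain ⟨x, c, c', _, rfl, h1, _⟩ := h
  exact h1

section lcp
variable [DecidableEq α]

def lcp : List α → List α → List α
  | a :: s, b :: t => if a = b then a :: lcp s t else []
  | _, _ => []

lemma lcp_spec : ∀ s t : List α, ∃ s' t',
    s = lcp s t ++ s' ∧ t = lcp s t ++ t' ∧ (s' = [] ∨ t' = [] ∨ s'.head? ≠ t'.head?)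
  | [], t => ⟨[], t, by simp [lcp], by simp [lcp], Or.inl rfl⟩
  | a :: s, [] => ⟨a :: s, [], by simp [lcp], by simp [lcp], Or.inr (Or.inl rfl)⟩
  | a :: s, b :: t => by
    by_cases hab : a = b
    · subst hab
      obtain ⟨s', t', hs, ht, h⟩ := lcp_spec s t
      refine ⟨s', t', ?_, ?_, h⟩
      · simp only [lcp, if_true, List.cons_append, List.cons.injEq, true_and, if_pos]
        simpa using hs
      · simp only [lcp, if_true, List.cons_append, List.cons.injEq, true_and, if_pos]
        simpa using ht
    · exact ⟨a :: s, b :: t, by simp [lcp, hab], by simp [lcp, hab],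
        Or.inr (Or.inr (by simp [hab]))⟩

lemma prefix_lcp : ∀ (u s t : List α), u <+: s → u <+: t → u <+: lcp s t
  | [], _, _, _, _ => List.nil_prefix
  | a :: u, s, t, hs, ht => by
    obtain ⟨s₁, rfl⟩ := hs
    obtain ⟨t₁, rfl⟩ := ht
    have hshape : lcp ((a :: u) ++ s₁) ((a :: u) ++ t₁) = a :: lcp (u ++ s₁) (u ++ t₁) := by
      simp [lcp]
    rw [hshape, List.cons_prefix_cons]
    exact ⟨rfl, prefix_lcp u _ _ (List.prefix_append u s₁) (List.prefix_append u t₁)⟩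

lemma lcs_exists (x1 x2 : List α) : ∃ X y z : List α, x1 = y ++ X ∧ x2 = z ++ X ∧
    (y = [] ∨ z = [] ∨ y.getLast? ≠ z.getLast?) ∧ (∀ u, u <:+ x1 → u <:+ x2 → u <:+ X) := by
  obtain ⟨s', t', hs, ht, hd⟩ := lcp_spec x1.reverse x2.reverse
  refine ⟨(lcp x1.reverse x2.reverse).reverse, s'.reverse, t'.reverse, ?_, ?_, ?_, ?_⟩
  · have := congrArg List.reverse hs
    simpa using this
  · have := congrArg List.reverse ht
    simpa using this
  · rcases hd with h | h | h
    · exact Or.inl (by simp [h])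
    · exact Or.inr (Or.inl (by simp [h]))
    · exact Or.inr (Or.inr (by rwa [List.getLast?_reverse, List.getLast?_reverse]))
  · intro u hu1 hu2
    have h1 : u.reverse <+: x1.reverse := List.reverse_prefix.mpr hu1
    have h2 : u.reverse <+: x2.reverse := List.reverse_prefix.mpr hu2
    have h3 : u.reverse <+: lcp x1.reverse x2.reverse := prefix_lcp _ _ _ h1 h2
    have h4 : u.reverse <+: (lcp x1.reverse x2.reverse).reverse.reverse := by
      rwa [List.reverse_reverse]
    exact List.reverse_prefix.mp h4

end lcp

lemma exists_supmax (w : List α) : ∀ u : List α, RightExt w u →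
    ∃ v, SupMaxExt w v ∧ u <:+ v := by
  have H : ∀ n : ℕ, ∀ u : List α, RightExt w u → w.length - u.length = n →
      ∃ v, SupMaxExt w v ∧ u <:+ v := by
    intro n
    induction n using Nat.strong_induction_on with
    | _ n ih =>
      intro u hu hn
      by_cases hs : ∀ v, RightExt w v → u <:+ v → u = v
      · exact ⟨u, ⟨hu, hs⟩, List.suffix_refl u⟩
      · push_neg at hs
        obtain ⟨v, hv, huv, hne⟩ := hs
        have hle := huv.length_le
        have hlen : u.length < v.length := by
          rcases lt_or_eq_of_le hle with h | h
          · exact h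
          · exact absurd (huv.eq_of_length h) hne
        have hvw : v.length ≤ w.length := hv.infix.length_le
        obtain ⟨v', hv', hvv'⟩ := ih (w.length - v.length) (by omega) v hv rfl
        exact ⟨v', hv', huv.trans hvv'⟩
  intro u hu
  exact H (w.length - u.length) u hu rfl

lemma exists_leftmost {w u : List α} (h : u <:+: w) : ∃ i, leftmostOcc w u i := by
  have hne : {i | occursAt w u i}.Nonempty := by
    obtain ⟨p, hp⟩ := infix_iff_occ.mp h
    exact ⟨p + 1, hp.toOccursAt⟩
  exact ⟨sInf {i | occursAt w u i}, Nat.sInf_mem hne, fun i' hi' => Nat.sInf_le hi'⟩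

end ChiAux

section ChiAux2

open List

variable {α : Type*} [DecidableEq α]

lemma bridge {w x : List α} {c1 c2 : α} (hx : x ≠ [])
    (h1 : RightExt w (x ++ [c1])) (h2 : RightExt w (x ++ [c2])) :
    ∃ p1 p2, Occ w (x ++ [c1]) p1 ∧ Occ w (x ++ [c2]) p2 ∧
      ∀ k < x.length, chiEquiv w (p1 + 1 + k) (p2 + 1 + k) := by
  obtain ⟨v1, hv1, hsuf1⟩ := exists_supmax w _ h1
  obtain ⟨v2, hv2, hsuf2⟩ := exists_supmax w _ h2
  obtain ⟨a1, hva1⟩ := hsuf1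
  obtain ⟨a2, hva2⟩ := hsuf2
  obtain ⟨X, y, z, hx1, hx2, hcond, hmax⟩ := lcs_exists (a1 ++ x) (a2 ++ x)
  have hxX : x <:+ X := hmax x (List.suffix_append a1 x) (List.suffix_append a2 x)
  have hXx : x.length ≤ X.length := hxX.length_le
  have hXne : X ≠ [] := by
    intro h
    exact hx (List.suffix_nil.mp (h ▸ hxX))
  have hv1e : v1 = y ++ X ++ [c1] := by
    rw [← hva1, ← List.append_assoc, hx1]
  have hv2e : v2 = z ++ X ++ [c2] := by
    rw [← hva2, ← List.append_assoc, hx2]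
  rw [hv1e] at hv1
  rw [hv2e] at hv2
  obtain ⟨i1, hl1⟩ := exists_leftmost hv1.1.infix
  obtain ⟨i2, hl2⟩ := exists_leftmost hv2.1.infix
  have hgen : ∀ k, k < X.length → GenPair w (i1 + y.length + k) (i2 + z.length + k) := by
    intro k hk
    exact ⟨y, z, X, c1, c2, i1, i2, hXne, hv1, hv2, hcond, hl1, hl2, k, hk, rfl, rfl⟩
  have hocc1 : Occ w (y ++ X ++ [c1]) (i1 - 1) := occursAt_toOcc hl1.1
  have hocc2 : Occ w (z ++ X ++ [c2]) (i2 - 1) := occursAt_toOcc hl2.1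
  have hi1 : 1 ≤ i1 := hl1.1.1
  have hi2 : 1 ≤ i2 := hl2.1.1
  obtain ⟨b, hb⟩ := hxX
  have hsufx1 : x ++ [c1] <:+ y ++ X ++ [c1] :=
    ⟨y ++ b, by rw [← hb]; simp [List.append_assoc]⟩
  have hsufx2 : x ++ [c2] <:+ z ++ X ++ [c2] :=
    ⟨z ++ b, by rw [← hb]; simp [List.append_assoc]⟩
  have hp1 := hocc1.of_suffix hsufx1
  have hp2 := hocc2.of_suffix hsufx2
  have hp1' : i1 - 1 + (y ++ X ++ [c1]).length - (x ++ [c1]).length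
      = i1 - 1 + y.length + (X.length - x.length) := by
    simp only [List.length_append, List.length_cons, List.length_nil]
    omega
  have hp2' : i2 - 1 + (z ++ X ++ [c2]).length - (x ++ [c2]).length
      = i2 - 1 + z.length + (X.length - x.length) := by
    simp only [List.length_append, List.length_cons, List.length_nil]
    omega
  rw [hp1'] at hp1
  rw [hp2'] at hp2
  refine ⟨_, _, hp1, hp2, ?_⟩
  intro k hk
  have hgk := hgen (X.length - x.length + k) (by omega)
  have e1 : i1 - 1 + y.length + (X.length - x.length) + 1 + k
      = i1 + y.length + (X.length - x.length + k) := by omega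
  have e2 : i2 - 1 + z.length + (X.length - x.length) + 1 + k
      = i2 + z.length + (X.length - x.length + k) := by omega
  rw [e1, e2]
  exact Relation.EqvGen.rel _ _ hgk

lemma suffix_not_prefix {w : List α} (hterm : UniqueTerm w) {p q : ℕ}
    (hp : p < w.length) (hq : q < w.length) (hne : p ≠ q) :
    ¬ (w.drop p <+: w.drop q) := by
  obtain ⟨v, d, rfl, hd⟩ := hterm
  rintro ⟨r, hr⟩
  have hlw : (v ++ [d]).length = v.length + 1 := by simp
  have hlen := congrArg List.length hr
  rw [List.length_append, List.length_drop, List.length_drop, hlw] at hlen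
  rw [hlw] at hp hq
  have hpv : p ≤ v.length := by omega
  have hs : (v ++ [d]).drop p = v.drop p ++ [d] := List.drop_append_of_le_length hpv
  have hds : d ∈ (v ++ [d]).drop p := by rw [hs]; simp
  have hqp : q < p := by omega
  have hslen : ((v ++ [d]).drop p).length ≤ (v.drop q).length := by
    rw [List.length_drop, List.length_drop, hlw]
    omega
  have htake : ((v ++ [d]).drop q).take ((v ++ [d]).drop p).length = (v ++ [d]).drop p := by
    rw [← hr, List.take_left]
  have hq' : (v ++ [d]).drop q = v.drop q ++ [d] := List.drop_append_of_le_length (by omega)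
  rw [hq', List.take_append_of_le_length hslen] at htake
  rw [← htake] at hds
  exact hd (List.drop_subset _ _ (List.mem_of_mem_take hds))

lemma occ_pair_equiv {w : List α} (hterm : UniqueTerm w) :
    ∀ n : ℕ, ∀ (x : List α) (c : α) (p q : ℕ), w.length - x.length ≤ n →
      Occ w (x ++ [c]) p → Occ w (x ++ [c]) q →
      ∀ k < x.length, chiEquiv w (p + 1 + k) (q + 1 + k) := by
  intro n
  induction n using Nat.strong_induction_on with
  | _ n ih =>
    intro x c p q hn hp hq k hk
    rcases eq_or_ne p q with rfl | hpq
    · exact Relation.EqvGen.refl _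
    have hp1 := hp.1
    have hq1 := hq.1
    rw [List.length_append, List.length_cons, List.length_nil] at hp1 hq1
    have hpw : p < w.length := by omega
    have hqw : q < w.length := by omega
    have hxs : x ++ [c] <+: w.drop p := List.prefix_iff_eq_take.mpr hp.2.symm
    have hxt : x ++ [c] <+: w.drop q := List.prefix_iff_eq_take.mpr hq.2.symm
    obtain ⟨s', t', hs, ht, hd⟩ := lcp_spec (w.drop p) (w.drop q)
    have hXpre : x ++ [c] <+: lcp (w.drop p) (w.drop q) := prefix_lcp _ _ _ hxs hxt
    set X := lcp (w.drop p) (w.drop q) with hXdef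
    have hs' : s' ≠ [] := by
      rintro rfl
      refine suffix_not_prefix hterm hpw hqw hpq ?_
      rw [hs, List.append_nil]
      exact ⟨t', ht.symm⟩
    have ht' : t' ≠ [] := by
      rintro rfl
      refine suffix_not_prefix hterm hqw hpw (Ne.symm hpq) ?_
      rw [ht, List.append_nil]
      exact ⟨s', hs.symm⟩
    obtain ⟨d1, s'', rfl⟩ := List.exists_cons_of_ne_nil hs'
    obtain ⟨d2, t'', rfl⟩ := List.exists_cons_of_ne_nil ht'
    have hd12 : d1 ≠ d2 := by
      rcases hd with h | h | h
      · simp at h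
      · simp at h
      · simpa using h
    have hoccp : Occ w (X ++ [d1]) p :=
      Occ.of_prefix_drop (le_of_lt hpw) ⟨s'', by rw [hs]; simp⟩
    have hoccq : Occ w (X ++ [d2]) q :=
      Occ.of_prefix_drop (le_of_lt hqw) ⟨t'', by rw [ht]; simp⟩
    have hXlen : x.length < X.length := by
      have := hXpre.length_le
      rw [List.length_append, List.length_cons, List.length_nil] at this
      omega
    have hXw : X.length + 1 ≤ w.length := by
      have := hoccp.1
      rw [List.length_append, List.length_cons, List.length_nil] at this
      omega
    have hXne : X ≠ [] := List.ne_nil_of_length_pos (by omega)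
    have hr1 : RightExt w (X ++ [d1]) :=
      ⟨X, d1, d2, hd12, rfl, infix_iff_occ.mpr ⟨p, hoccp⟩, infix_iff_occ.mpr ⟨q, hoccq⟩⟩
    have hr2 : RightExt w (X ++ [d2]) :=
      ⟨X, d2, d1, hd12.symm, rfl, infix_iff_occ.mpr ⟨q, hoccq⟩, infix_iff_occ.mpr ⟨p, hoccp⟩⟩
    obtain ⟨r1, r2, ho1, ho2, hbr⟩ := bridge hXne hr1 hr2
    have ih1 := ih (w.length - X.length) (by omega) X d1 p r1 (le_refl _) hoccp ho1
    have ih2 := ih (w.length - X.length) (by omega) X d2 q r2 (le_refl _) hoccq ho2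
    exact Relation.EqvGen.trans _ _ _ (ih1 k (by omega))
      (Relation.EqvGen.trans _ _ _ (hbr k (by omega))
        (Relation.EqvGen.symm _ _ (ih2 k (by omega))))

end ChiAux2

section ChiMain

open List

variable {α : Type*} [DecidableEq α]

omit [DecidableEq α] in
lemma genpair_char {w : List α} {j j' : ℕ} (h : GenPair w j j') :
    w[j - 1]? = w[j' - 1]? := by
  obtain ⟨y, z, x, c, c', i, i', hx, h1, h2, hcnd, hl1, hl2, k, hk, rfl, rfl⟩ := h
  have o1 : Occ w (y ++ x ++ [c]) (i - 1) := occursAt_toOcc hl1.1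
  have o2 : Occ w (z ++ x ++ [c']) (i' - 1) := occursAt_toOcc hl2.1
  have hi : 1 ≤ i := hl1.1.1
  have hi' : 1 ≤ i' := hl2.1.1
  have e1 : i + y.length + k - 1 = (i - 1) + (y.length + k) := by omega
  have e2 : i' + z.length + k - 1 = (i' - 1) + (z.length + k) := by omega
  have g : ∀ (u : List α) (cc : α), (u ++ x ++ [cc])[u.length + k]? = x[k]? := by
    intro u cc
    rw [List.append_assoc, List.getElem?_append_right (Nat.le_add_right _ _)]
    have e3 : u.length + k - u.length = k := by omega
    rw [e3]
    exact List.getElem?_append_left hk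
  have hb1 : y.length + k < (y ++ x ++ [c]).length := by
    simp only [List.length_append, List.length_cons, List.length_nil]
    omega
  have hb2 : z.length + k < (z ++ x ++ [c']).length := by
    simp only [List.length_append, List.length_cons, List.length_nil]
    omega
  rw [e1, e2, o1.get hb1, o2.get hb2, g, g]

omit [DecidableEq α] in
lemma chiEquiv_char {w : List α} {i j : ℕ} (h : chiEquiv w i j) :
    w[i - 1]? = w[j - 1]? := by
  induction h with
  | rel a b hab => exact genpair_char hab
  | refl a => rfl
  | symm a b _ ihab => exact ihab.symm
  | trans a b c _ _ ih1 ih2 => exact ih1.trans ih2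

lemma char_chiEquiv {w : List α} (hterm : UniqueTerm w) {i j : ℕ}
    (hi1 : 1 ≤ i) (hi2 : i ≤ w.length) (hj1 : 1 ≤ j) (hj2 : j ≤ w.length)
    (hc : w[i - 1]? = w[j - 1]?) : chiEquiv w i j := by
  rcases eq_or_ne i j with rfl | hij
  · exact Relation.EqvGen.refl _
  set p := i - 1 with hpdef
  set q := j - 1 with hqdef
  have hpq : p ≠ q := by omega
  have hpw : p < w.length := by omega
  have hqw : q < w.length := by omega
  obtain ⟨s', t', hs, ht, hd⟩ := lcp_spec (w.drop p) (w.drop q)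
  set X := lcp (w.drop p) (w.drop q) with hXdef
  have hhead : (w.drop p).head? = (w.drop q).head? := by
    rw [List.head?_drop, List.head?_drop]
    exact hc
  have hsne : w.drop p ≠ [] := by
    intro h
    have := congrArg List.length h
    rw [List.length_drop] at this
    simp at this
    omega
  have htne : w.drop q ≠ [] := by
    intro h
    have := congrArg List.length h
    rw [List.length_drop] at this
    simp at this
    omega
  have hXne : X ≠ [] := by
    intro hX
    rw [hX, List.nil_append] at hs ht
    rcases hd with h | h | h
    · exact hsne (hs.trans h)
    · exact htne (ht.trans h)
    · exact h (by rw [← hs, ← ht, hhead])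
  have hs' : s' ≠ [] := by
    rintro rfl
    refine suffix_not_prefix hterm hpw hqw hpq ?_
    rw [hs, List.append_nil]
    exact ⟨t', ht.symm⟩
  have ht' : t' ≠ [] := by
    rintro rfl
    refine suffix_not_prefix hterm hqw hpw (Ne.symm hpq) ?_
    rw [ht, List.append_nil]
    exact ⟨s', hs.symm⟩
  obtain ⟨d1, s'', rfl⟩ := List.exists_cons_of_ne_nil hs'
  obtain ⟨d2, t'', rfl⟩ := List.exists_cons_of_ne_nil ht'
  have hd12 : d1 ≠ d2 := by
    rcases hd with h | h | h
    · simp at h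
    · simp at h
    · simpa using h
  have hoccp : Occ w (X ++ [d1]) p :=
    Occ.of_prefix_drop (le_of_lt hpw) ⟨s'', by rw [hs]; simp⟩
  have hoccq : Occ w (X ++ [d2]) q :=
    Occ.of_prefix_drop (le_of_lt hqw) ⟨t'', by rw [ht]; simp⟩
  have hr1 : RightExt w (X ++ [d1]) :=
    ⟨X, d1, d2, hd12, rfl, infix_iff_occ.mpr ⟨p, hoccp⟩, infix_iff_occ.mpr ⟨q, hoccq⟩⟩
  have hr2 : RightExt w (X ++ [d2]) :=
    ⟨X, d2, d1, hd12.symm, rfl, infix_iff_occ.mpr ⟨q, hoccq⟩, infix_iff_occ.mpr ⟨p, hoccp⟩⟩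
  obtain ⟨r1, r2, ho1, ho2, hbr⟩ := bridge hXne hr1 hr2
  have hXpos : 0 < X.length := List.length_pos_iff.mpr hXne
  have ih1 := occ_pair_equiv hterm w.length X d1 p r1 (by omega) hoccp ho1 0 hXpos
  have ih2 := occ_pair_equiv hterm w.length X d2 q r2 (by omega) hoccq ho2 0 hXpos
  have hbr0 := hbr 0 hXpos
  have ei : i = p + 1 + 0 := by omega
  have ej : j = q + 1 + 0 := by omega
  rw [ei, ej]
  exact Relation.EqvGen.trans _ _ _ ih1
    (Relation.EqvGen.trans _ _ _ hbr0 (Relation.EqvGen.symm _ _ ih2))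

end ChiMain

theorem stmt10 {α : Type*} [DecidableEq α] (w : List α) (hterm : UniqueTerm w) :
    (∀ i j, 1 ≤ i → i ≤ w.length → 1 ≤ j → j ≤ w.length →
      (chiEquiv w i j ↔ w[i - 1]? = w[j - 1]?)) ∧
    Set.ncard {s : Set ℕ | ∃ i, 1 ≤ i ∧ i ≤ w.length ∧
      s = {j | 1 ≤ j ∧ j ≤ w.length ∧ chiEquiv w i j}} = w.toFinset.card := by
  have hmain : ∀ i j, 1 ≤ i → i ≤ w.length → 1 ≤ j → j ≤ w.length →
      (chiEquiv w i j ↔ w[i - 1]? = w[j - 1]?) := by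
    intro i j hi1 hi2 hj1 hj2
    exact ⟨chiEquiv_char, char_chiEquiv hterm hi1 hi2 hj1 hj2⟩
  refine ⟨hmain, ?_⟩
  have himg : {s : Set ℕ | ∃ i, 1 ≤ i ∧ i ≤ w.length ∧
      s = {j | 1 ≤ j ∧ j ≤ w.length ∧ chiEquiv w i j}}
      = (fun c => {j | 1 ≤ j ∧ j ≤ w.length ∧ w[j - 1]? = some c}) '' (↑w.toFinset) := by
    ext s
    simp only [Set.mem_setOf_eq, Set.mem_image, Finset.mem_coe, List.mem_toFinset]
    constructor
    · rintro ⟨i, hi1, hi2, rfl⟩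
      have hlt : i - 1 < w.length := by omega
      refine ⟨w[i - 1], List.getElem_mem hlt, ?_⟩
      ext j
      simp only [Set.mem_setOf_eq]
      constructor
      · rintro ⟨hj1, hj2, hj⟩
        exact ⟨hj1, hj2, (hmain i j hi1 hi2 hj1 hj2).mpr
          (by rw [hj, List.getElem?_eq_getElem hlt])⟩
      · rintro ⟨hj1, hj2, hj⟩
        refine ⟨hj1, hj2, ?_⟩
        rw [← (hmain i j hi1 hi2 hj1 hj2).mp hj]
        exact List.getElem?_eq_getElem hlt
    · rintro ⟨c, hc, rfl⟩
      obtain ⟨m, hm⟩ := List.getElem?_of_mem hc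
      have hmlt : m < w.length := (List.getElem?_eq_some_iff.mp hm).1
      refine ⟨m + 1, by omega, by omega, ?_⟩
      have hm1 : w[m + 1 - 1]? = some c := by simpa using hm
      ext j
      simp only [Set.mem_setOf_eq]
      constructor
      · rintro ⟨hj1, hj2, hj⟩
        exact ⟨hj1, hj2, (hmain (m + 1) j (by omega) (by omega) hj1 hj2).mpr
          (by rw [hj]; exact hm1)⟩
      · rintro ⟨hj1, hj2, hj⟩
        refine ⟨hj1, hj2, ?_⟩
        rw [← (hmain (m + 1) j (by omega) (by omega) hj1 hj2).mp hj]
        exact hm1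
  have hinj : Set.InjOn (fun c => {j | 1 ≤ j ∧ j ≤ w.length ∧ w[j - 1]? = some c})
      (↑w.toFinset) := by
    intro c hc c' hc' hcc'
    simp only [Finset.mem_coe, List.mem_toFinset] at hc hc'
    obtain ⟨m, hm⟩ := List.getElem?_of_mem hc
    have hmlt : m < w.length := (List.getElem?_eq_some_iff.mp hm).1
    have hcc2 : {j | 1 ≤ j ∧ j ≤ w.length ∧ w[j - 1]? = some c}
        = {j | 1 ≤ j ∧ j ≤ w.length ∧ w[j - 1]? = some c'} := hcc'
    have hmem : (m + 1) ∈ {j | 1 ≤ j ∧ j ≤ w.length ∧ w[j - 1]? = some c} :=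
      ⟨by omega, by omega, by simpa using hm⟩
    rw [hcc2] at hmem
    have h2 := hmem.2.2
    simp only [Nat.add_sub_cancel] at h2
    rw [hm] at h2
    exact Option.some.inj h2
  rw [himg, Set.ncard_image_of_injOn hinj, Set.ncard_coe_finset]
end
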